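/- arXiv:1209.5875 — 3 statements merged into one kernel-verified Lean document; each statement's English description precedes it below -/
import Mathlib

section
/- Let $(X_1,\mu_1)$, $(X_2,\mu_2)$, $(X_3,\mu_3)$ be compact metric spaces equipped with Borel probability measures, and let $d_{mGH}$ denote the measured Gromov–Hausdorff distance. Then $d_{mGH}((X_1,\mu_1),(X_2,\mu_2)) \le 2\,( d_{mGH}((X_1,\mu_1),(X_3,\mu_3)) + d_{mGH}((X_3,\mu_3),(X_2,\mu_2)) )$ (almost triangle inequality). -/
open MeasureTheory Metric

/-- An `ε`-measured-Gromov–Hausdorff approximation pair between `(X, μ)` and `(X', μ')`: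
measurable `ε`-approximations `ψ : X → X'` and `ψ' : X' → X` (distorting distances by less
than `ε` and with `ε`-dense images) that almost push the measures onto each other. -/
def MGHApprox {X X' : Type*} [MetricSpace X] [MetricSpace X']
    [MeasurableSpace X] [MeasurableSpace X']
    (μ : Measure X) (μ' : Measure X') (ε : ℝ) : Prop :=
  ∃ (ψ : X → X') (ψ' : X' → X),
    Measurable ψ ∧ Measurable ψ' ∧
    (∀ x y : X, |dist (ψ x) (ψ y) - dist x y| < ε) ∧
    (∀ x' : X', ∃ x : X, dist (ψ x) x' < ε) ∧
    (∀ x' y' : X', |dist (ψ' x') (ψ' y') - dist x' y'| < ε) ∧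
    (∀ x : X, ∃ x' : X', dist (ψ' x') x < ε) ∧
    (∀ A' : Set X', MeasurableSet A' →
      μ (ψ ⁻¹' A') < μ' (thickening ε A') + ENNReal.ofReal ε) ∧
    (∀ A : Set X, MeasurableSet A →
      μ' (ψ' ⁻¹' A) < μ (thickening ε A) + ENNReal.ofReal ε)

/-- The measured Gromov–Hausdorff "distance": the infimum of those `ε > 0` for which there
is an `ε`-measured approximation pair. -/
noncomputable def dmGH {X X' : Type*} [MetricSpace X] [MetricSpace X']
    [MeasurableSpace X] [MeasurableSpace X']
    (μ : Measure X) (μ' : Measure X') : ℝ :=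
  sInf {ε : ℝ | 0 < ε ∧ MGHApprox μ μ' ε}

section Aux

variable {X X' X'' : Type*} [MetricSpace X] [MetricSpace X'] [MetricSpace X'']
  [MeasurableSpace X] [MeasurableSpace X'] [MeasurableSpace X'']

lemma mghApprox_mono {μ : Measure X} {μ' : Measure X'} {ε ε' : ℝ}
    (h : MGHApprox μ μ' ε) (hle : ε ≤ ε') : MGHApprox μ μ' ε' := by
  obtain ⟨ψ, ψ', hψ, hψ', h1, h2, h3, h4, h5, h6⟩ := h
  refine ⟨ψ, ψ', hψ, hψ', fun x y => lt_of_lt_of_le (h1 x y) hle,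
    fun x' => (h2 x').imp fun x hx => lt_of_lt_of_le hx hle,
    fun x' y' => lt_of_lt_of_le (h3 x' y') hle,
    fun x => (h4 x).imp fun x' hx => lt_of_lt_of_le hx hle, ?_, ?_⟩
  · intro A' hA'
    exact lt_of_lt_of_le (h5 A' hA')
      (add_le_add (measure_mono (thickening_mono hle _)) (ENNReal.ofReal_le_ofReal hle))
  · intro A hA
    exact lt_of_lt_of_le (h6 A hA)
      (add_le_add (measure_mono (thickening_mono hle _)) (ENNReal.ofReal_le_ofReal hle))

/-- Composition of approximations. -/
lemma mghApprox_comp [BorelSpace X] [BorelSpace X'] [BorelSpace X'']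
    {μ : Measure X} {μ' : Measure X'} {μ'' : Measure X''} {ε δ : ℝ}
    (hε : 0 < ε) (hδ : 0 < δ)
    (h : MGHApprox μ μ'' ε) (h' : MGHApprox μ'' μ' δ) :
    MGHApprox μ μ' (2 * (ε + δ)) := by
  obtain ⟨ψ₁, ψ₁', hψ₁, hψ₁', ha1, ha2, ha3, ha4, ha5, ha6⟩ := h
  obtain ⟨ψ₂, ψ₂', hψ₂, hψ₂', hb1, hb2, hb3, hb4, hb5, hb6⟩ := h'
  have hεδ : (0:ℝ) < ε + δ := by linarith
  refine ⟨ψ₂ ∘ ψ₁, ψ₁' ∘ ψ₂', hψ₂.comp hψ₁, hψ₁'.comp hψ₂', ?_, ?_, ?_, ?_, ?_, ?_⟩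
  · intro x y
    have := ha1 x y
    have := hb1 (ψ₁ x) (ψ₁ y)
    simp only [Function.comp_apply]
    rw [abs_lt] at *
    constructor <;> [linarith; linarith]
  · intro x'
    obtain ⟨z, hz⟩ := hb2 x'
    obtain ⟨x, hx⟩ := ha2 z
    refine ⟨x, ?_⟩
    have h1 := hb1 (ψ₁ x) z
    rw [abs_lt] at h1
    calc dist ((ψ₂ ∘ ψ₁) x) x' ≤ dist (ψ₂ (ψ₁ x)) (ψ₂ z) + dist (ψ₂ z) x' :=
          dist_triangle _ _ _
      _ < 2 * (ε + δ) := by linarith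
  · intro x' y'
    have := hb3 x' y'
    have := ha3 (ψ₂' x') (ψ₂' y')
    simp only [Function.comp_apply]
    rw [abs_lt] at *
    constructor <;> [linarith; linarith]
  · intro x
    obtain ⟨z, hz⟩ := ha4 x
    obtain ⟨x', hx'⟩ := hb4 z
    refine ⟨x', ?_⟩
    have h1 := ha3 (ψ₂' x') z
    rw [abs_lt] at h1
    calc dist ((ψ₁' ∘ ψ₂') x') x ≤ dist (ψ₁' (ψ₂' x')) (ψ₁' z) + dist (ψ₁' z) x :=
          dist_triangle _ _ _
      _ < 2 * (ε + δ) := by linarith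
  · intro A' hA'
    have hsub : thickening ε (ψ₂ ⁻¹' A') ⊆ ψ₂ ⁻¹' (thickening (ε + δ) A') := by
      intro z hz
      rw [mem_thickening_iff] at hz
      obtain ⟨w, hw, hdw⟩ := hz
      have h1 := hb1 z w
      rw [abs_lt] at h1
      exact mem_thickening_iff.2 ⟨ψ₂ w, hw, by linarith⟩
    have step1 : μ ((ψ₂ ∘ ψ₁) ⁻¹' A') < μ'' (thickening ε (ψ₂ ⁻¹' A')) + ENNReal.ofReal ε :=
      ha5 _ (hψ₂ hA')
    have step2 : μ'' (ψ₂ ⁻¹' (thickening (ε + δ) A')) <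
        μ' (thickening δ (thickening (ε + δ) A')) + ENNReal.ofReal δ :=
      hb5 _ (isOpen_thickening.measurableSet)
    have step3 : thickening δ (thickening (ε + δ) A') ⊆ thickening (2 * (ε + δ)) A' :=
      (thickening_thickening_subset _ _ _).trans (thickening_mono (by linarith) _)
    calc μ ((ψ₂ ∘ ψ₁) ⁻¹' A')
        < μ'' (thickening ε (ψ₂ ⁻¹' A')) + ENNReal.ofReal ε := step1
      _ ≤ μ'' (ψ₂ ⁻¹' (thickening (ε + δ) A')) + ENNReal.ofReal ε :=
          add_le_add_left (measure_mono hsub) _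
      _ < μ' (thickening δ (thickening (ε + δ) A')) + ENNReal.ofReal δ + ENNReal.ofReal ε :=
          ENNReal.add_lt_add_right ENNReal.ofReal_ne_top step2
      _ ≤ μ' (thickening (2 * (ε + δ)) A') + ENNReal.ofReal (2 * (ε + δ)) := by
          rw [add_assoc, ← ENNReal.ofReal_add hδ.le hε.le]
          exact add_le_add (measure_mono step3)
            (ENNReal.ofReal_le_ofReal (by linarith))
  · intro A hA
    have hsub : thickening δ (ψ₁' ⁻¹' A) ⊆ ψ₁' ⁻¹' (thickening (ε + δ) A) := by
      intro z hz
      rw [mem_thickening_iff] at hz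
      obtain ⟨w, hw, hdw⟩ := hz
      have h1 := ha3 z w
      rw [abs_lt] at h1
      exact mem_thickening_iff.2 ⟨ψ₁' w, hw, by linarith⟩
    have step1 : μ' ((ψ₁' ∘ ψ₂') ⁻¹' A) < μ'' (thickening δ (ψ₁' ⁻¹' A)) + ENNReal.ofReal δ :=
      hb6 _ (hψ₁' hA)
    have step2 : μ'' (ψ₁' ⁻¹' (thickening (ε + δ) A)) <
        μ (thickening ε (thickening (ε + δ) A)) + ENNReal.ofReal ε :=
      ha6 _ (isOpen_thickening.measurableSet)
    have step3 : thickening ε (thickening (ε + δ) A) ⊆ thickening (2 * (ε + δ)) A :=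
      (thickening_thickening_subset _ _ _).trans (thickening_mono (by linarith) _)
    calc μ' ((ψ₁' ∘ ψ₂') ⁻¹' A)
        < μ'' (thickening δ (ψ₁' ⁻¹' A)) + ENNReal.ofReal δ := step1
      _ ≤ μ'' (ψ₁' ⁻¹' (thickening (ε + δ) A)) + ENNReal.ofReal δ :=
          add_le_add_left (measure_mono hsub) _
      _ < μ (thickening ε (thickening (ε + δ) A)) + ENNReal.ofReal ε + ENNReal.ofReal δ :=
          ENNReal.add_lt_add_right ENNReal.ofReal_ne_top step2
      _ ≤ μ (thickening (2 * (ε + δ)) A) + ENNReal.ofReal (2 * (ε + δ)) := by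
          rw [add_assoc, ← ENNReal.ofReal_add hε.le hδ.le]
          exact add_le_add (measure_mono step3)
            (ENNReal.ofReal_le_ofReal (by linarith))

/-- Some approximation always exists between compact spaces with probability measures. -/
lemma mghApprox_exists [CompactSpace X] [CompactSpace X']
    (μ : Measure X) (μ' : Measure X')
    [IsProbabilityMeasure μ] [IsProbabilityMeasure μ'] :
    ∃ ε : ℝ, 0 < ε ∧ MGHApprox μ μ' ε := by
  have hne : Nonempty X := by
    by_contra h
    rw [not_nonempty_iff] at h
    have : μ Set.univ = 1 := measure_univ
    simp [Set.univ_eq_empty_iff.2 h] at this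
  have hne' : Nonempty X' := by
    by_contra h
    rw [not_nonempty_iff] at h
    have : μ' Set.univ = 1 := measure_univ
    simp [Set.univ_eq_empty_iff.2 h] at this
  obtain ⟨x₀⟩ := hne
  obtain ⟨x₀'⟩ := hne'
  set C : ℝ := diam (Set.univ : Set X) + diam (Set.univ : Set X') + 2 with hC
  have hb : Bornology.IsBounded (Set.univ : Set X) := isBounded_of_compactSpace
  have hb' : Bornology.IsBounded (Set.univ : Set X') := isBounded_of_compactSpace
  have hd : 0 ≤ diam (Set.univ : Set X) := diam_nonneg
  have hd' : 0 ≤ diam (Set.univ : Set X') := diam_nonneg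
  have hCpos : 0 < C := by positivity
  have hC2 : (2:ℝ) ≤ C := by simp only [hC]; linarith
  refine ⟨C, hCpos, fun _ => x₀', fun _ => x₀, measurable_const, measurable_const,
    ?_, ?_, ?_, ?_, ?_, ?_⟩
  · intro x y
    have hxy : dist x y ≤ diam (Set.univ : Set X) :=
      dist_le_diam_of_mem hb trivial trivial
    have : |dist x₀' x₀' - dist x y| = dist x y := by
      simp [abs_of_nonpos, dist_nonneg]
    rw [this]
    linarith
  · intro x'
    have : dist x₀' x' ≤ diam (Set.univ : Set X') := dist_le_diam_of_mem hb' trivial trivial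
    exact ⟨x₀, by linarith⟩
  · intro x' y'
    have hxy : dist x' y' ≤ diam (Set.univ : Set X') :=
      dist_le_diam_of_mem hb' trivial trivial
    have : |dist x₀ x₀ - dist x' y'| = dist x' y' := by
      simp [abs_of_nonpos, dist_nonneg]
    rw [this]
    linarith
  · intro x
    have : dist x₀ x ≤ diam (Set.univ : Set X) := dist_le_diam_of_mem hb trivial trivial
    exact ⟨x₀', by linarith⟩
  · intro A' _
    calc μ ((fun _ => x₀') ⁻¹' A') ≤ 1 := prob_le_one
      _ < ENNReal.ofReal C := by
          rw [← ENNReal.ofReal_one]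
          exact ENNReal.ofReal_lt_ofReal_iff_of_nonneg zero_le_one |>.2 (by linarith)
      _ ≤ μ' (thickening C A') + ENNReal.ofReal C := le_add_self
  · intro A _
    calc μ' ((fun _ => x₀) ⁻¹' A) ≤ 1 := prob_le_one
      _ < ENNReal.ofReal C := by
          rw [← ENNReal.ofReal_one]
          exact ENNReal.ofReal_lt_ofReal_iff_of_nonneg zero_le_one |>.2 (by linarith)
      _ ≤ μ (thickening C A) + ENNReal.ofReal C := le_add_self

end Aux

/-- Almost triangle inequality for the measured Gromov–Hausdorff distance. -/
theorem dmGH_almost_triangle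
    {X₁ X₂ X₃ : Type*} [MetricSpace X₁] [MetricSpace X₂] [MetricSpace X₃]
    [CompactSpace X₁] [CompactSpace X₂] [CompactSpace X₃]
    [MeasurableSpace X₁] [MeasurableSpace X₂] [MeasurableSpace X₃]
    [BorelSpace X₁] [BorelSpace X₂] [BorelSpace X₃]
    (μ₁ : Measure X₁) (μ₂ : Measure X₂) (μ₃ : Measure X₃)
    [IsProbabilityMeasure μ₁] [IsProbabilityMeasure μ₂] [IsProbabilityMeasure μ₃] :
    dmGH μ₁ μ₂ ≤ 2 * (dmGH μ₁ μ₃ + dmGH μ₃ μ₂) := by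
  set S13 := {ε : ℝ | 0 < ε ∧ MGHApprox μ₁ μ₃ ε} with hS13
  set S32 := {ε : ℝ | 0 < ε ∧ MGHApprox μ₃ μ₂ ε} with hS32
  set S12 := {ε : ℝ | 0 < ε ∧ MGHApprox μ₁ μ₂ ε} with hS12
  have hne13 : S13.Nonempty := (mghApprox_exists μ₁ μ₃).imp fun ε h => h
  have hne32 : S32.Nonempty := (mghApprox_exists μ₃ μ₂).imp fun ε h => h
  have hbd13 : BddBelow S13 := ⟨0, fun x hx => hx.1.le⟩
  have hbd32 : BddBelow S32 := ⟨0, fun x hx => hx.1.le⟩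
  have hbd12 : BddBelow S12 := ⟨0, fun x hx => hx.1.le⟩
  apply le_of_forall_pos_le_add
  intro η hη
  obtain ⟨ε, hεS, hεlt⟩ := (csInf_lt_iff hbd13 hne13).1
    (lt_add_of_pos_right _ (by positivity : (0:ℝ) < η / 4))
  obtain ⟨δ, hδS, hδlt⟩ := (csInf_lt_iff hbd32 hne32).1
    (lt_add_of_pos_right _ (by positivity : (0:ℝ) < η / 4))
  have hmem : 2 * (ε + δ) ∈ S12 :=
    ⟨by have := hεS.1; have := hδS.1; linarith,
     mghApprox_comp hεS.1 hδS.1 hεS.2 hδS.2⟩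
  calc dmGH μ₁ μ₂ ≤ 2 * (ε + δ) := csInf_le hbd12 hmem
    _ ≤ 2 * (dmGH μ₁ μ₃ + dmGH μ₃ μ₂) + η := by
        unfold dmGH
        rw [← hS13, ← hS32]
        linarith
end

section
/- Let $(X,\mu)$ and $(X',\mu')$ be compact metric spaces with Borel probability measures. If $d_{mGH}((X,\mu),(X',\mu'))=0$, then there exists an isometry $\psi:X\to X'$ such that the pushforward measure satisfies $\psi_*\mu=\mu'$. -/
open MeasureTheory Metric Filter Set ENNReal Topology

/-- If the measured Gromov–Hausdorff distance between two compact metric measure spaces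
vanishes, then there is a measure-preserving isometry between them. -/
theorem dmGH_eq_zero_iff_isometric
    {X X' : Type*} [MetricSpace X] [MetricSpace X']
    [CompactSpace X] [CompactSpace X']
    [MeasurableSpace X] [MeasurableSpace X'] [BorelSpace X] [BorelSpace X']
    (μ : Measure X) (μ' : Measure X')
    [IsProbabilityMeasure μ] [IsProbabilityMeasure μ']
    (h : dmGH μ μ' = 0) :
    ∃ ψ : X ≃ᵢ X', Measure.map ψ μ = μ' := by
  classical
  -- the spaces are nonempty
  have hX : Nonempty X := by
    by_contra hc
    rw [not_nonempty_iff] at hc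
    have h1 : μ Set.univ = 1 := measure_univ
    rw [show (Set.univ : Set X) = ∅ from Set.univ_eq_empty_iff.2 hc, measure_empty] at h1
    simp at h1
  have hX' : Nonempty X' := by
    by_contra hc
    rw [not_nonempty_iff] at hc
    have h1 : μ' Set.univ = 1 := measure_univ
    rw [show (Set.univ : Set X') = ∅ from Set.univ_eq_empty_iff.2 hc, measure_empty] at h1
    simp at h1
  obtain ⟨x₀⟩ := hX
  obtain ⟨x₀'⟩ := hX'
  -- the defining set of dmGH is nonempty
  set S : Set ℝ := {ε : ℝ | 0 < ε ∧ MGHApprox μ μ' ε} with hSdef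
  have hSne : S.Nonempty := by
    refine ⟨diam (Set.univ : Set X) + diam (Set.univ : Set X') + 2, ?_, ?_⟩
    · positivity
    · set ε₀ := diam (Set.univ : Set X) + diam (Set.univ : Set X') + 2 with hε₀
      have hd : (0:ℝ) ≤ diam (Set.univ : Set X) := diam_nonneg
      have hd' : (0:ℝ) ≤ diam (Set.univ : Set X') := diam_nonneg
      have h2ε : (2:ℝ) ≤ ε₀ := by simp [hε₀]; linarith
      have hone : (1:ℝ≥0∞) < ENNReal.ofReal ε₀ := by
        calc (1:ℝ≥0∞) < 2 := by norm_num
        _ = ENNReal.ofReal 2 := by norm_num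
        _ ≤ ENNReal.ofReal ε₀ := ENNReal.ofReal_le_ofReal h2ε
      refine ⟨fun _ => x₀', fun _ => x₀, measurable_const, measurable_const, ?_, ?_, ?_, ?_, ?_, ?_⟩
      · intro x y
        have : dist x y ≤ diam (Set.univ : Set X) :=
          dist_le_diam_of_mem isCompact_univ.isBounded trivial trivial
        rw [abs_sub_lt_iff]
        constructor <;> simp [hε₀] <;> [skip; linarith] <;> nlinarith [dist_nonneg (x := x) (y := y)]
      · intro x'
        refine ⟨x₀, ?_⟩
        have : dist x₀' x' ≤ diam (Set.univ : Set X') :=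
          dist_le_diam_of_mem isCompact_univ.isBounded trivial trivial
        simp [hε₀]; linarith
      · intro x' y'
        have : dist x' y' ≤ diam (Set.univ : Set X') :=
          dist_le_diam_of_mem isCompact_univ.isBounded trivial trivial
        rw [abs_sub_lt_iff]
        constructor <;> simp [hε₀] <;> [skip; linarith] <;> nlinarith [dist_nonneg (x := x') (y := y')]
      · intro x
        refine ⟨x₀', ?_⟩
        have : dist x₀ x ≤ diam (Set.univ : Set X) :=
          dist_le_diam_of_mem isCompact_univ.isBounded trivial trivial
        simp [hε₀]; linarith
      · intro A' _
        calc μ ((fun _ => x₀') ⁻¹' A') ≤ 1 := prob_le_one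
          _ < ENNReal.ofReal ε₀ := hone
          _ ≤ μ' (thickening ε₀ A') + ENNReal.ofReal ε₀ := le_add_self
      · intro A _
        calc μ' ((fun _ => x₀) ⁻¹' A) ≤ 1 := prob_le_one
          _ < ENNReal.ofReal ε₀ := hone
          _ ≤ μ (thickening ε₀ A) + ENNReal.ofReal ε₀ := le_add_self
  -- extract arbitrarily small ε in S
  have hS : ∀ δ : ℝ, 0 < δ → ∃ ε, ε ∈ S ∧ ε < δ := by
    intro δ hδ
    by_contra hc
    push_neg at hc
    have : δ ≤ dmGH μ μ' := le_csInf hSne fun ε hε => hc ε hε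
    rw [h] at this
    linarith
  have hseq : ∀ n : ℕ, ∃ (ε : ℝ) (ψ : X → X') (ψ' : X' → X),
      0 < ε ∧ ε < 1 / (n + 1) ∧ Measurable ψ ∧ Measurable ψ' ∧
      (∀ x y : X, |dist (ψ x) (ψ y) - dist x y| < ε) ∧
      (∀ x' : X', ∃ x : X, dist (ψ x) x' < ε) ∧
      (∀ A' : Set X', MeasurableSet A' →
        μ (ψ ⁻¹' A') < μ' (thickening ε A') + ENNReal.ofReal ε) := by
    intro n
    obtain ⟨ε, ⟨hpos, ψ, ψ', hm, hm', hdi, hde, _, _, hms, _⟩, hlt⟩ :=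
      hS (1 / (n + 1)) (by positivity)
    exact ⟨ε, ψ, ψ', hpos, hlt, hm, hm', hdi, hde, hms⟩
  choose εs F G hεpos hεlt hFm hGm hFdist hFdense hFmeas using hseq
  -- εs tends to 0
  have hε0 : Tendsto εs atTop (𝓝 0) := by
    apply squeeze_zero (fun n => (hεpos n).le) (fun n => (hεlt n).le)
    exact tendsto_one_div_add_atTop_nhds_zero_nat
  -- the ultrafilter
  set U : Ultrafilter ℕ := Ultrafilter.of atTop with hUdef
  have hU : (U : Filter ℕ) ≤ atTop := Ultrafilter.of_le _
  have hεU : Tendsto εs U (𝓝 0) := hε0.mono_left hU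
  -- ultrafilter limits in the compact spaces
  have limX' : ∀ g : ℕ → X', ∃ y : X', Tendsto g U (𝓝 y) := by
    intro g
    obtain ⟨y, -, hy⟩ := isCompact_univ.ultrafilter_le_nhds (U.map g)
      (by simp [le_principal_iff])
    exact ⟨y, by rwa [Ultrafilter.coe_map] at hy⟩
  have limX : ∀ g : ℕ → X, ∃ y : X, Tendsto g U (𝓝 y) := by
    intro g
    obtain ⟨y, -, hy⟩ := isCompact_univ.ultrafilter_le_nhds (U.map g)
      (by simp [le_principal_iff])
    exact ⟨y, by rwa [Ultrafilter.coe_map] at hy⟩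
  choose ψ hψ using fun x => limX' fun n => F n x
  -- ψ is an isometry
  have hiso : Isometry ψ := by
    apply Isometry.of_dist_eq
    intro x y
    have h1 : Tendsto (fun n => dist (F n x) (F n y)) U (𝓝 (dist (ψ x) (ψ y))) :=
      (hψ x).dist (hψ y)
    have h2 : Tendsto (fun n => dist (F n x) (F n y)) U (𝓝 (dist x y)) := by
      have h3 : Tendsto (fun n => dist (F n x) (F n y) - dist x y) U (𝓝 0) :=
        squeeze_zero_norm (fun n => (hFdist n x y).le) hεU
      have := h3.add_const (dist x y)
      simpa using this
    exact tendsto_nhds_unique h1 h2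
  have hmψ : Measurable ψ := hiso.continuous.measurable
  -- ψ is surjective
  have hsurj : Function.Surjective ψ := by
    intro x'
    choose xs hxs using fun n => hFdense n x'
    obtain ⟨x, hx⟩ := limX xs
    refine ⟨x, ?_⟩
    have hdx : Tendsto (fun n => dist x (xs n)) U (𝓝 0) := by
      have := (tendsto_iff_dist_tendsto_zero.1 hx)
      simpa [dist_comm] using this
    have h0 : Tendsto (fun n => dist (F n x) x') U (𝓝 0) := by
      apply squeeze_zero (fun n => dist_nonneg)
        (g := fun n => (dist x (xs n) + εs n) + εs n)
      · intro n
        have h1 : dist (F n x) (F n (xs n)) < dist x (xs n) + εs n := by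
          have := (abs_sub_lt_iff.1 (hFdist n x (xs n))).1
          linarith
        calc dist (F n x) x' ≤ dist (F n x) (F n (xs n)) + dist (F n (xs n)) x' :=
              dist_triangle _ _ _
          _ ≤ (dist x (xs n) + εs n) + εs n := by
              have := hxs n; linarith
      · have := (hdx.add hεU).add hεU
        simpa using this
    have h1 : Tendsto (fun n => F n x) U (𝓝 x') := tendsto_iff_dist_tendsto_zero.2 h0
    exact tendsto_nhds_unique (hψ x) h1
  -- key measure inequality on closed sets
  have key1 : ∀ A' : Set X', IsClosed A' → μ (ψ ⁻¹' A') ≤ μ' A' := by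
    intro A' hA'
    have step : ∀ δ : ℝ, 0 < δ →
        μ (ψ ⁻¹' A') ≤ μ' (thickening (5 * δ) A') + ENNReal.ofReal δ := by
      intro δ hδ
      obtain ⟨t, -, htfin, htcov⟩ := finite_cover_balls_of_compact
        (isCompact_univ : IsCompact (Set.univ : Set X)) hδ
      have hmem1 : {n | ∀ y ∈ t, dist (F n y) (ψ y) < δ} ∈ U := by
        have : ∀ y ∈ t, {n | dist (F n y) (ψ y) < δ} ∈ U := by
          intro y _
          have h1 : Tendsto (fun n => dist (F n y) (ψ y)) U (𝓝 0) :=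
            tendsto_iff_dist_tendsto_zero.1 (hψ y)
          exact h1.eventually_lt_const hδ
        have := (Filter.biInter_mem htfin).2 this
        rw [← Ultrafilter.mem_coe]
        convert this using 1
        ext n
        simp
      have hmem2 : {n | εs n < δ} ∈ U := hεU.eventually_lt_const hδ
      obtain ⟨n, hn1, hn2⟩ := Ultrafilter.nonempty_of_mem (inter_mem hmem1 hmem2)
      have hn1' : ∀ y ∈ t, dist (F n y) (ψ y) < δ := hn1
      have hn2' : εs n < δ := hn2
      have hclose : ∀ x : X, dist (F n x) (ψ x) < 4 * δ := by
        intro x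
        obtain ⟨y, hyt, hxy⟩ := by
          have := htcov (Set.mem_univ x)
          simpa using this
        have h1 : dist (F n x) (F n y) < dist x y + εs n := by
          have := (abs_sub_lt_iff.1 (hFdist n x y)).1
          linarith
        have h2 : dist (F n y) (ψ y) < δ := hn1' y hyt
        have h3 : dist (ψ y) (ψ x) = dist y x := hiso.dist_eq y x
        have h4 : dist x y < δ := by simpa [mem_ball, dist_comm] using hxy
        calc dist (F n x) (ψ x)
            ≤ dist (F n x) (F n y) + (dist (F n y) (ψ y) + dist (ψ y) (ψ x)) := by
              have := dist_triangle (F n x) (F n y) (ψ x)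
              have := dist_triangle (F n y) (ψ y) (ψ x)
              linarith [dist_triangle (F n x) (F n y) (ψ x),
                dist_triangle (F n y) (ψ y) (ψ x)]
          _ < 4 * δ := by
              rw [h3]
              rw [dist_comm y x]
              linarith [hn2']
      have hsub : ψ ⁻¹' A' ⊆ F n ⁻¹' (thickening (4 * δ) A') := by
        intro x hx
        exact mem_thickening_iff.2 ⟨ψ x, hx, hclose x⟩
      calc μ (ψ ⁻¹' A') ≤ μ (F n ⁻¹' (thickening (4 * δ) A')) := measure_mono hsub
        _ ≤ μ' (thickening (εs n) (thickening (4 * δ) A')) + ENNReal.ofReal (εs n) :=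
            (hFmeas n _ isOpen_thickening.measurableSet).le
        _ ≤ μ' (thickening (5 * δ) A') + ENNReal.ofReal δ := by
            refine add_le_add (measure_mono ?_) (ENNReal.ofReal_le_ofReal hn2'.le)
            calc thickening (εs n) (thickening (4 * δ) A')
                ⊆ thickening (εs n + 4 * δ) A' := thickening_thickening_subset _ _ _
              _ ⊆ thickening (5 * δ) A' := thickening_mono (by linarith [hn2']) A'
    -- pass to the limit δ → 0⁺
    have hfin : ∃ R > 0, μ' (thickening R A') ≠ ⊤ := ⟨1, one_pos, measure_ne_top _ _⟩
    have h5 : Tendsto (fun δ : ℝ => 5 * δ) (𝓝[>] (0:ℝ)) (𝓝[>] (0:ℝ)) := by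
      apply tendsto_nhdsWithin_of_tendsto_nhds_of_eventually_within
      · have : Tendsto (fun δ : ℝ => 5 * δ) (𝓝 (0:ℝ)) (𝓝 (5 * 0)) :=
          (continuous_const.mul continuous_id).tendsto 0
        simpa using this.mono_left nhdsWithin_le_nhds
      · filter_upwards [self_mem_nhdsWithin] with δ hδ
        exact mul_pos (by norm_num : (0:ℝ) < 5) hδ
    have h6 : Tendsto (fun δ : ℝ => μ' (thickening (5 * δ) A')) (𝓝[>] (0:ℝ))
        (𝓝 (μ' A')) := by
      have := (tendsto_measure_thickening hfin).comp h5
      rwa [hA'.closure_eq] at this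
    have h7 : Tendsto (fun δ : ℝ => ENNReal.ofReal δ) (𝓝[>] (0:ℝ)) (𝓝 0) := by
      have : Tendsto (fun δ : ℝ => ENNReal.ofReal δ) (𝓝 (0:ℝ)) (𝓝 (ENNReal.ofReal 0)) :=
        ENNReal.continuous_ofReal.tendsto 0
      simpa using this.mono_left nhdsWithin_le_nhds
    have h8 : Tendsto (fun δ : ℝ => μ' (thickening (5 * δ) A') + ENNReal.ofReal δ)
        (𝓝[>] (0:ℝ)) (𝓝 (μ' A')) := by
      have := h6.add h7
      simpa using this
    refine ge_of_tendsto h8 ?_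
    filter_upwards [self_mem_nhdsWithin] with δ hδ
    exact step δ hδ
  -- reverse inequality on open sets
  have keyOpen : ∀ V : Set X', IsOpen V → μ' V ≤ μ (ψ ⁻¹' V) := by
    intro V hV
    have h1 : μ (ψ ⁻¹' Vᶜ) ≤ μ' Vᶜ := key1 Vᶜ hV.isClosed_compl
    have h2 : μ' V = 1 - μ' Vᶜ := by
      have h4 := prob_compl_eq_one_sub (μ := μ') hV.measurableSet.compl
      rwa [compl_compl] at h4
    have h3 : μ (ψ ⁻¹' V) = 1 - μ (ψ ⁻¹' Vᶜ) := by
      have : ψ ⁻¹' V = (ψ ⁻¹' Vᶜ)ᶜ := by simp [Set.preimage_compl]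
      rw [this, prob_compl_eq_one_sub (hmψ hV.isClosed_compl.measurableSet)]
    rw [h2, h3]
    exact tsub_le_tsub_left h1 1
  -- reverse inequality on closed sets
  have key2 : ∀ A' : Set X', IsClosed A' → μ' A' ≤ μ (ψ ⁻¹' A') := by
    intro A' hA'
    have hpre : ∀ δ : ℝ, ψ ⁻¹' (thickening δ A') = thickening δ (ψ ⁻¹' A') := by
      intro δ
      ext x
      simp only [Set.mem_preimage, mem_thickening_iff]
      constructor
      · rintro ⟨z, hz, hdz⟩
        obtain ⟨w, rfl⟩ := hsurj z
        exact ⟨w, hz, by rwa [hiso.dist_eq] at hdz⟩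
      · rintro ⟨w, hw, hdw⟩
        exact ⟨ψ w, hw, by rwa [hiso.dist_eq]⟩
    have hclosed : IsClosed (ψ ⁻¹' A') := hA'.preimage hiso.continuous
    have hfin : ∃ R > 0, μ (thickening R (ψ ⁻¹' A')) ≠ ⊤ := ⟨1, one_pos, measure_ne_top _ _⟩
    have htends : Tendsto (fun δ : ℝ => μ (thickening δ (ψ ⁻¹' A'))) (𝓝[>] (0:ℝ))
        (𝓝 (μ (ψ ⁻¹' A'))) := by
      have := tendsto_measure_thickening hfin
      rwa [hclosed.closure_eq] at this
    refine ge_of_tendsto htends ?_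
    filter_upwards [self_mem_nhdsWithin] with δ hδ
    calc μ' A' ≤ μ' (thickening δ A') := measure_mono (self_subset_thickening hδ A')
      _ ≤ μ (ψ ⁻¹' (thickening δ A')) := keyOpen _ isOpen_thickening
      _ = μ (thickening δ (ψ ⁻¹' A')) := by rw [hpre]
  -- equality of measures
  have hprob : IsProbabilityMeasure (Measure.map ψ μ) :=
    Measure.isProbabilityMeasure_map hmψ.aemeasurable
  have hmapeq : Measure.map ψ μ = μ' := by
    refine ext_of_generate_finite {s : Set X' | IsClosed s} ?_ isPiSystem_isClosed ?_ ?_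
    · rw [BorelSpace.measurable_eq (α := X'), borel_eq_generateFrom_isClosed]
    · intro s hs
      rw [Measure.map_apply hmψ hs.measurableSet]
      exact le_antisymm (key1 s hs) (key2 s hs)
    · simp
  -- build the isometry equivalence
  refine ⟨⟨Equiv.ofBijective ψ ⟨hiso.injective, hsurj⟩, hiso⟩, ?_⟩
  exact hmapeq
end

section
/- Let $(\lambda_p)_{p\ge0}$ be nonnegative reals with $\lambda_p \ge c\,p^{2/n}$ for some $c>0$, $n\ge1$, and let $(\phi_p)$ be functions on a set $X$ with $\|\phi_p\|_{\infty} \le C_F(1+\lambda_p^2)^{s_F/2}$ for constants $C_F,s_F>0$. Then for every $0<\sigma<1$ there exists $C(\sigma)>0$ (depending on $c,n,C_F,s_F,\sigma$ but not on $E$, $t$, $x$, $\tilde x$) such that for all $E>0$, $t>0$ and $x,\tilde x\in X$: $\left|\sum_{p:\lambda_p\ge E} e^{-\lambda_p t}\,\phi_p(x)\phi_p(\tilde x)\right| \le C(\sigma)\,(1+t^{-(n/2+2s_F)})\,e^{-(1-\sigma)Et}$, where the series converges absolutely. -/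
lemma hk_rpow_mul_exp_neg_le (a : ℝ) (ha : 0 < a) (y : ℝ) (hy : 0 ≤ y) :
    y ^ a * Real.exp (-y) ≤ a ^ a := by
  have h2 := Real.add_one_le_exp (y / a)
  have h1 : y ≤ a * Real.exp (y / a) := by
    have : y / a ≤ Real.exp (y / a) := by linarith
    calc y = a * (y / a) := by field_simp
    _ ≤ a * Real.exp (y / a) := mul_le_mul_of_nonneg_left this ha.le
  have h3 : y ^ a ≤ (a * Real.exp (y / a)) ^ a := Real.rpow_le_rpow hy h1 ha.le
  have h4 : (a * Real.exp (y / a)) ^ a = a ^ a * Real.exp y := by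
    rw [Real.mul_rpow ha.le (Real.exp_pos _).le, ← Real.exp_mul,
      div_mul_cancel₀ _ ha.ne']
  calc y ^ a * Real.exp (-y) ≤ (a ^ a * Real.exp y) * Real.exp (-y) :=
        mul_le_mul_of_nonneg_right (h4 ▸ h3) (Real.exp_pos _).le
    _ = a ^ a := by rw [mul_assoc, ← Real.exp_add]; simp

lemma hk_pow_mul_exp_neg_le (n : ℕ) (hn : 1 ≤ n) (y : ℝ) (hy : 0 ≤ y) :
    y ^ n * Real.exp (-y) ≤ (n : ℝ) ^ n := by
  have hn0 : (0:ℝ) < (n:ℝ) := by exact_mod_cast hn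
  have := hk_rpow_mul_exp_neg_le (n : ℝ) hn0 y hy
  rwa [Real.rpow_natCast, Real.rpow_natCast] at this

lemma hk_tail_inv_sq (P : ℕ) (hP : 1 ≤ P) :
    Summable (fun i : ℕ => (((P : ℝ) + i) ^ 2)⁻¹) ∧
    ∑' i : ℕ, (((P : ℝ) + i) ^ 2)⁻¹ ≤ 2 / P := by
  have hP1 : (1:ℝ) ≤ (P:ℝ) := by exact_mod_cast hP
  have hbase : Summable (fun i : ℕ => ((i : ℝ) ^ 2)⁻¹) :=
    Real.summable_nat_pow_inv.mpr one_lt_two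
  have hsum : Summable (fun i : ℕ => (((P : ℝ) + i) ^ 2)⁻¹) := by
    have := (summable_nat_add_iff P).mpr hbase
    refine this.congr fun i => ?_
    push_cast
    ring_nf
  set f : ℕ → ℝ := fun j => ((P : ℝ) + j)⁻¹ with hf
  refine ⟨hsum, Summable.tsum_le_of_sum_le hsum fun s => ?_⟩
  obtain ⟨N, hN⟩ := s.exists_nat_subset_range
  have hPi : ∀ i : ℕ, (1:ℝ) ≤ (P : ℝ) + i := by
    intro i
    have : (0:ℝ) ≤ (i:ℝ) := by positivity
    linarith
  calc ∑ i ∈ s, (((P : ℝ) + i) ^ 2)⁻¹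
      ≤ ∑ i ∈ Finset.range N, (((P : ℝ) + i) ^ 2)⁻¹ :=
        Finset.sum_le_sum_of_subset_of_nonneg hN fun i _ _ => by positivity
    _ ≤ ∑ i ∈ Finset.range N, 2 * (f i - f (i+1)) := by
        refine Finset.sum_le_sum fun i _ => ?_
        have h1 : (1:ℝ) ≤ (P : ℝ) + i := hPi i
        have key : f i - f (i+1) = (((P : ℝ) + i) * ((P : ℝ) + i + 1))⁻¹ := by
          simp only [hf]
          push_cast
          rw [inv_sub_inv (ne_of_gt (by linarith : (0:ℝ) < (P:ℝ) + i))
            (ne_of_gt (by linarith : (0:ℝ) < (P:ℝ) + ((i:ℝ) + 1)))]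
          rw [show ((P:ℝ) + ((i:ℝ)+1)) - ((P:ℝ) + (i:ℝ)) = 1 by ring, one_div]
          ring_nf
        rw [key, inv_eq_one_div, ← div_eq_mul_inv, div_le_div_iff₀ (by positivity) (by positivity)]
        nlinarith
    _ = 2 * (f 0 - f N) := by rw [← Finset.mul_sum, Finset.sum_range_sub' f N]
    _ ≤ 2 / P := by
        have h1 : (0:ℝ) < (P : ℝ) := by linarith
        have h2 : (0:ℝ) < (P : ℝ) + N := by linarith [hPi N]
        have hf0 : f 0 = ((P:ℝ))⁻¹ := by simp [hf]
        have h3 : (0:ℝ) ≤ f N := by simp only [hf]; positivity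
        rw [div_eq_mul_inv, hf0]
        nlinarith

set_option maxHeartbeats 1000000 in
lemma hk_exp_sum_bound (n : ℕ) (hn : 1 ≤ n) (b : ℝ) (hb : 0 < b) :
    Summable (fun p : ℕ => Real.exp (-(b * (p:ℝ) ^ ((2:ℝ)/(n:ℝ))))) ∧
    ∑' p : ℕ, Real.exp (-(b * (p:ℝ) ^ ((2:ℝ)/(n:ℝ)))) ≤
      1 + (1 + 2*(n:ℝ)^n) * b ^ (-((n:ℝ)/2)) := by
  have hn0 : (0:ℝ) < (n:ℝ) := by exact_mod_cast hn
  set K : ℝ := (n:ℝ)^n * b ^ (-(n:ℝ)) with hK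
  have hK0 : 0 ≤ K := by
    have := Real.rpow_pos_of_pos hb (-(n:ℝ))
    positivity
  -- per-term bound for p ≥ 1
  have hterm : ∀ p : ℕ, 1 ≤ p →
      Real.exp (-(b * (p:ℝ) ^ ((2:ℝ)/(n:ℝ)))) ≤ K * (((p:ℝ))^2)⁻¹ := by
    intro p hp
    have hp0 : (0:ℝ) < (p:ℝ) := by exact_mod_cast hp
    have hr0 : (0:ℝ) < (p:ℝ) ^ ((2:ℝ)/(n:ℝ)) := Real.rpow_pos_of_pos hp0 _
    set y : ℝ := b * (p:ℝ) ^ ((2:ℝ)/(n:ℝ)) with hy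
    have hy0 : 0 < y := by positivity
    have hkey := hk_pow_mul_exp_neg_le n hn y hy0.le
    have hyn : y ^ n = b ^ n * (p:ℝ)^2 := by
      rw [hy, mul_pow]
      congr 1
      rw [← Real.rpow_natCast ((p:ℝ) ^ ((2:ℝ)/(n:ℝ))) n, ← Real.rpow_mul hp0.le,
        div_mul_cancel₀ _ hn0.ne']
      norm_num
    have hbn : (0:ℝ) < b ^ n := by positivity
    have hexp : Real.exp (-y) ≤ (n:ℝ)^n / y ^ n := by
      rw [le_div_iff₀ (by positivity : (0:ℝ) < y ^ n)]
      linarith [hkey]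
    calc Real.exp (-y) ≤ (n:ℝ)^n / y ^ n := hexp
      _ = K * (((p:ℝ))^2)⁻¹ := by
          rw [hyn, hK, Real.rpow_neg hb.le, Real.rpow_natCast]
          field_simp
  -- summability
  have hshift : Summable (fun i : ℕ => K * (((1:ℝ) + i)^2)⁻¹) := by
    have := (hk_tail_inv_sq 1 le_rfl).1
    simpa using this.mul_left K
  have hsum : Summable (fun p : ℕ => Real.exp (-(b * (p:ℝ) ^ ((2:ℝ)/(n:ℝ))))) := by
    rw [← summable_nat_add_iff 1]
    refine Summable.of_nonneg_of_le (fun i => (Real.exp_pos _).le) (fun i => ?_) hshift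
    have := hterm (i+1) (by omega)
    simpa [add_comm] using this
  refine ⟨hsum, ?_⟩
  -- split at P
  set P : ℕ := ⌈b ^ (-((n:ℝ)/2))⌉₊ with hPdef
  have hbpow : (0:ℝ) < b ^ (-((n:ℝ)/2)) := Real.rpow_pos_of_pos hb _
  have hP1 : 1 ≤ P := Nat.one_le_iff_ne_zero.mpr (by
    simp only [hPdef, ne_eq, Nat.ceil_eq_zero, not_le]
    exact hbpow)
  have hPge : b ^ (-((n:ℝ)/2)) ≤ (P:ℝ) := Nat.le_ceil _
  have hPle : (P:ℝ) ≤ b ^ (-((n:ℝ)/2)) + 1 := (Nat.ceil_lt_add_one hbpow.le).le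
  obtain ⟨htailsum, htail⟩ := hk_tail_inv_sq P hP1
  have hsplit := (Summable.sum_add_tsum_nat_add P hsum).symm
  rw [hsplit]
  have hhead : ∑ i ∈ Finset.range P, Real.exp (-(b * (i:ℝ) ^ ((2:ℝ)/(n:ℝ)))) ≤ (P:ℝ) := by
    calc ∑ i ∈ Finset.range P, Real.exp (-(b * (i:ℝ) ^ ((2:ℝ)/(n:ℝ))))
        ≤ ∑ _i ∈ Finset.range P, (1:ℝ) := by
          refine Finset.sum_le_sum fun i _ => ?_
          rw [Real.exp_le_one_iff]
          have : (0:ℝ) ≤ (i:ℝ) ^ ((2:ℝ)/(n:ℝ)) := Real.rpow_nonneg (Nat.cast_nonneg i) _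
          nlinarith
      _ = (P:ℝ) := by simp
  have htail2 : ∑' i : ℕ, Real.exp (-(b * ((i + P:ℕ):ℝ) ^ ((2:ℝ)/(n:ℝ)))) ≤ K * (2 / P) := by
    have hle : ∀ i : ℕ, Real.exp (-(b * ((i + P:ℕ):ℝ) ^ ((2:ℝ)/(n:ℝ))))
        ≤ K * (((P:ℝ) + i)^2)⁻¹ := by
      intro i
      have h := hterm (i + P) (by omega)
      have hcast : (((i + P:ℕ)):ℝ) = (P:ℝ) + i := by push_cast; ring
      exact h.trans_eq (by rw [hcast])
    calc ∑' i : ℕ, Real.exp (-(b * ((i + P:ℕ):ℝ) ^ ((2:ℝ)/(n:ℝ))))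
        ≤ ∑' i : ℕ, K * (((P:ℝ) + i)^2)⁻¹ := by
          refine Summable.tsum_le_tsum hle ?_ (htailsum.mul_left K)
          exact (summable_nat_add_iff P).mpr hsum
      _ = K * ∑' i : ℕ, (((P:ℝ) + i)^2)⁻¹ := tsum_mul_left
      _ ≤ K * (2 / P) := by
          have hP0 : (0:ℝ) < (P:ℝ) := by exact_mod_cast hP1
          exact mul_le_mul_of_nonneg_left htail hK0
  have hKP : K * (2 / P) ≤ 2 * (n:ℝ)^n * b ^ (-((n:ℝ)/2)) := by
    have hP0 : (0:ℝ) < (P:ℝ) := by exact_mod_cast hP1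
    have hinv : 1 / (P:ℝ) ≤ b ^ ((n:ℝ)/2) := by
      have hpos : (0:ℝ) < b ^ ((n:ℝ)/2) := Real.rpow_pos_of_pos hb _
      rw [div_le_iff₀ hP0]
      have : b ^ (-((n:ℝ)/2)) = (b ^ ((n:ℝ)/2))⁻¹ := Real.rpow_neg hb.le _
      rw [this] at hPge
      calc (1:ℝ) = b ^ ((n:ℝ)/2) * (b ^ ((n:ℝ)/2))⁻¹ := by field_simp
        _ ≤ b ^ ((n:ℝ)/2) * (P:ℝ) := by gcongr
    have hmul : b ^ (-(n:ℝ)) * b ^ ((n:ℝ)/2) = b ^ (-((n:ℝ)/2)) := by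
      rw [← Real.rpow_add hb]
      congr 1
      ring
    calc K * (2 / P) = 2 * (n:ℝ)^n * (b ^ (-(n:ℝ)) * (1 / (P:ℝ))) := by
          rw [hK]; ring
      _ ≤ 2 * (n:ℝ)^n * (b ^ (-(n:ℝ)) * b ^ ((n:ℝ)/2)) := by
          have h1 : (0:ℝ) ≤ b ^ (-(n:ℝ)) := (Real.rpow_pos_of_pos hb _).le
          have h2 : (0:ℝ) ≤ 2 * (n:ℝ)^n := by positivity
          exact mul_le_mul_of_nonneg_left (mul_le_mul_of_nonneg_left hinv h1) h2
      _ = 2 * (n:ℝ)^n * b ^ (-((n:ℝ)/2)) := by rw [hmul]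
  calc ∑ i ∈ Finset.range P, Real.exp (-(b * (i:ℝ) ^ ((2:ℝ)/(n:ℝ))))
        + ∑' i : ℕ, Real.exp (-(b * ((i + P:ℕ):ℝ) ^ ((2:ℝ)/(n:ℝ))))
      ≤ (P:ℝ) + K * (2 / P) := add_le_add hhead htail2
    _ ≤ (b ^ (-((n:ℝ)/2)) + 1) + 2 * (n:ℝ)^n * b ^ (-((n:ℝ)/2)) := add_le_add hPle hKP
    _ = 1 + (1 + 2*(n:ℝ)^n) * b ^ (-((n:ℝ)/2)) := by ring

set_option maxHeartbeats 1000000 in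
/-- Tail estimate for the heat kernel eigenfunction expansion: under a Weyl-type lower
bound `λ_p ≥ c p^{2/n}` on the eigenvalues and sup-norm bounds
`‖φ_p‖_∞ ≤ C_F (1 + λ_p²)^{s_F/2}` on the eigenfunctions, for every `0 < σ < 1` there is a
constant `C = C(c, n, C_F, s_F, σ)` such that for all `E > 0`, `t > 0` and points `x, x̃`,
`|∑_{λ_p ≥ E} e^{-λ_p t} φ_p(x) φ_p(x̃)| ≤ C (1 + t^{-(n/2 + 2 s_F)}) e^{-(1-σ) E t}`,
the series converging absolutely. -/
theorem heat_kernel_tail_estimate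
    (n : ℕ) (hn : 1 ≤ n) (c C_F s_F : ℝ) (hc : 0 < c) (hCF : 0 < C_F) (hsF : 0 < s_F)
    (σ : ℝ) (hσ0 : 0 < σ) (hσ1 : σ < 1) :
    ∃ C > (0 : ℝ), ∀ (X : Type) (lam : ℕ → ℝ) (φ : ℕ → X → ℝ),
      (∀ p, 0 ≤ lam p) →
      (∀ p : ℕ, c * (p : ℝ) ^ ((2 : ℝ) / n) ≤ lam p) →
      (∀ p x, |φ p x| ≤ C_F * (1 + (lam p) ^ 2) ^ (s_F / 2)) →
      ∀ E > (0 : ℝ), ∀ t > (0 : ℝ), ∀ x x' : X,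
        Summable (fun p => if E ≤ lam p then Real.exp (-(lam p) * t) * φ p x * φ p x' else 0) ∧
        |∑' p, if E ≤ lam p then Real.exp (-(lam p) * t) * φ p x * φ p x' else 0|
          ≤ C * (1 + t ^ (-((n : ℝ) / 2 + 2 * s_F))) * Real.exp (-(1 - σ) * E * t) := by
  have hn0 : (0:ℝ) < (n:ℝ) := by exact_mod_cast hn
  have hsF2 : (0:ℝ) < 2 * s_F := by linarith
  set A : ℝ := (2*s_F) ^ (2*s_F) with hA
  have hA0 : 0 < A := Real.rpow_pos_of_pos hsF2 _
  set A2 : ℝ := A * (σ/2) ^ (-(2*s_F)) with hA2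
  have hA20 : 0 < A2 := mul_pos hA0 (Real.rpow_pos_of_pos (by linarith) _)
  set B2 : ℝ := (1 + 2*(n:ℝ)^n) * (σ*c/2) ^ (-((n:ℝ)/2)) with hB2
  have hB20 : 0 < B2 := by
    have h1 : (0:ℝ) < 1 + 2*(n:ℝ)^n := by positivity
    exact mul_pos h1 (Real.rpow_pos_of_pos (by positivity) _)
  have h2sf0 : (0:ℝ) < (2:ℝ) ^ s_F := Real.rpow_pos_of_pos two_pos _
  refine ⟨C_F^2 * 2^s_F * (1 + A2) * (1 + B2), by positivity, ?_⟩
  intro X lam φ hlam0 hweyl hφ E hE t ht x x'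
  set u : ℝ := σ * t / 2 with hu
  have hu0 : 0 < u := by positivity
  set b : ℝ := σ * c * t / 2 with hbdef
  have hb0 : 0 < b := by positivity
  obtain ⟨hsumexp, hS⟩ := hk_exp_sum_bound n hn b hb0
  set M : ℝ := C_F^2 * 2^s_F * (1 + A * u ^ (-(2*s_F))) * Real.exp (-(1 - σ) * E * t) with hM
  have hM0 : 0 ≤ M := by
    have h1 : 0 < u ^ (-(2*s_F)) := Real.rpow_pos_of_pos hu0 _
    positivity
  set f : ℕ → ℝ := fun p =>
    if E ≤ lam p then Real.exp (-(lam p) * t) * φ p x * φ p x' else 0 with hfdef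
  set g : ℕ → ℝ := fun p => M * Real.exp (-(b * (p:ℝ) ^ ((2:ℝ)/(n:ℝ)))) with hg
  -- pointwise bound
  have hfg : ∀ p, |f p| ≤ g p := by
    intro p
    have hg0 : 0 ≤ g p := by
      have := Real.exp_pos (-(b * (p:ℝ) ^ ((2:ℝ)/(n:ℝ))))
      simp only [hg]
      positivity
    simp only [hfdef]
    split_ifs with hEp
    swap
    · simpa using hg0
    -- main case
    have hl0 : 0 ≤ lam p := hlam0 p
    have hBnd : (0:ℝ) ≤ C_F * (1 + lam p ^ 2) ^ (s_F / 2) := by positivity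
    have habs : |Real.exp (-(lam p) * t) * φ p x * φ p x'| ≤
        Real.exp (-(lam p) * t) * ((C_F * (1 + lam p ^ 2) ^ (s_F / 2)) *
          (C_F * (1 + lam p ^ 2) ^ (s_F / 2))) := by
      rw [abs_mul, abs_mul, abs_of_pos (Real.exp_pos _), mul_assoc]
      exact mul_le_mul_of_nonneg_left
        (mul_le_mul (hφ p x) (hφ p x') (abs_nonneg _) hBnd) (Real.exp_pos _).le
    -- square identity and polynomial bound
    have hsq : (C_F * (1 + lam p ^ 2) ^ (s_F / 2)) * (C_F * (1 + lam p ^ 2) ^ (s_F / 2))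
        = C_F^2 * (1 + lam p ^ 2) ^ s_F := by
      have h1 : (0:ℝ) < 1 + lam p ^ 2 := by positivity
      rw [show C_F * (1 + lam p ^ 2) ^ (s_F / 2) * (C_F * (1 + lam p ^ 2) ^ (s_F / 2))
          = C_F^2 * ((1 + lam p ^ 2) ^ (s_F / 2) * (1 + lam p ^ 2) ^ (s_F / 2)) from by ring,
        ← Real.rpow_add h1]
      norm_num
    have hpoly1 : (1 + lam p ^ 2) ^ s_F ≤ 2^s_F * (1 + (lam p) ^ (2*s_F)) := by
      have hmax : (0:ℝ) < max 1 (lam p) := lt_max_of_lt_left one_pos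
      have h1 : 1 + lam p ^ 2 ≤ 2 * (max 1 (lam p))^2 := by
        have h2 : lam p ≤ max 1 (lam p) := le_max_right _ _
        have h3 : (1:ℝ) ≤ max 1 (lam p) := le_max_left _ _
        nlinarith
      have h4 : (1 + lam p ^ 2) ^ s_F ≤ (2 * (max 1 (lam p))^2) ^ s_F :=
        Real.rpow_le_rpow (by positivity) h1 hsF.le
      have h5 : (2 * (max 1 (lam p))^2) ^ s_F = 2^s_F * ((max 1 (lam p))^2) ^ s_F :=
        Real.mul_rpow (by norm_num) (by positivity)
      have h6 : ((max 1 (lam p))^2) ^ s_F = (max 1 (lam p)) ^ (2*s_F) := by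
        rw [← Real.rpow_natCast (max 1 (lam p)) 2, ← Real.rpow_mul hmax.le]
        norm_num
      have h7 : (max 1 (lam p)) ^ (2*s_F) ≤ 1 + (lam p) ^ (2*s_F) := by
        rcases le_total (lam p) 1 with h | h
        · rw [max_eq_left h, Real.one_rpow]
          have : (0:ℝ) ≤ (lam p) ^ (2*s_F) := Real.rpow_nonneg hl0 _
          linarith
        · rw [max_eq_right h]
          have : (0:ℝ) ≤ (lam p) ^ (2*s_F) := Real.rpow_nonneg hl0 _
          linarith
      calc (1 + lam p ^ 2) ^ s_F ≤ 2^s_F * ((max 1 (lam p))^2) ^ s_F := h5 ▸ h4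
        _ = 2^s_F * (max 1 (lam p)) ^ (2*s_F) := by rw [h6]
        _ ≤ 2^s_F * (1 + (lam p) ^ (2*s_F)) := by
            exact mul_le_mul_of_nonneg_left h7 h2sf0.le
    have hpoly2 : (1 + (lam p) ^ (2*s_F)) * Real.exp (-(u * lam p))
        ≤ 1 + A * u ^ (-(2*s_F)) := by
      have he1 : Real.exp (-(u * lam p)) ≤ 1 := by
        rw [Real.exp_le_one_iff]
        have : 0 ≤ u * lam p := by positivity
        linarith
      have he2 : (lam p) ^ (2*s_F) * Real.exp (-(u * lam p)) ≤ A * u ^ (-(2*s_F)) := by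
        have hkey := hk_rpow_mul_exp_neg_le (2*s_F) hsF2 (u * lam p) (by positivity)
        have hmul : (u * lam p) ^ (2*s_F) = u ^ (2*s_F) * (lam p) ^ (2*s_F) :=
          Real.mul_rpow hu0.le hl0
        have huinv : u ^ (-(2*s_F)) * u ^ (2*s_F) = 1 := by
          rw [← Real.rpow_add hu0]
          simp
        calc (lam p) ^ (2*s_F) * Real.exp (-(u * lam p))
            = u ^ (-(2*s_F)) * ((u * lam p) ^ (2*s_F) * Real.exp (-(u * lam p))) := by
              rw [hmul]
              rw [show u ^ (-(2*s_F)) * (u ^ (2*s_F) * (lam p) ^ (2*s_F) * Real.exp (-(u * lam p)))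
                = (u ^ (-(2*s_F)) * u ^ (2*s_F)) * ((lam p) ^ (2*s_F) * Real.exp (-(u * lam p))) from by ring,
                huinv, one_mul]
        _ ≤ u ^ (-(2*s_F)) * A := by
              exact mul_le_mul_of_nonneg_left hkey (Real.rpow_pos_of_pos hu0 _).le
        _ = A * u ^ (-(2*s_F)) := by ring
      have hnn : (0:ℝ) ≤ Real.exp (-(u * lam p)) := (Real.exp_pos _).le
      calc (1 + (lam p) ^ (2*s_F)) * Real.exp (-(u * lam p))
          = Real.exp (-(u * lam p)) + (lam p) ^ (2*s_F) * Real.exp (-(u * lam p)) := by ring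
        _ ≤ 1 + A * u ^ (-(2*s_F)) := add_le_add he1 he2
    have hexpsplit : Real.exp (-(lam p) * t)
        = Real.exp (-((1-σ) * lam p * t)) * Real.exp (-(u * lam p)) * Real.exp (-(u * lam p)) := by
      rw [← Real.exp_add, ← Real.exp_add]
      congr 1
      rw [hu]
      ring
    have he3 : Real.exp (-((1-σ) * lam p * t)) ≤ Real.exp (-(1 - σ) * E * t) := by
      rw [Real.exp_le_exp]
      have h5 : (1-σ)*t*E ≤ (1-σ)*t*lam p :=
        mul_le_mul_of_nonneg_left hEp (by nlinarith)
      nlinarith [h5]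
    have he4 : Real.exp (-(u * lam p)) ≤ Real.exp (-(b * (p:ℝ) ^ ((2:ℝ)/(n:ℝ)))) := by
      rw [Real.exp_le_exp, neg_le_neg_iff]
      calc b * (p:ℝ) ^ ((2:ℝ)/(n:ℝ)) = u * (c * (p:ℝ) ^ ((2:ℝ)/(n:ℝ))) := by
            rw [hbdef, hu]; ring
        _ ≤ u * lam p := mul_le_mul_of_nonneg_left (hweyl p) hu0.le
    calc |Real.exp (-(lam p) * t) * φ p x * φ p x'|
        ≤ Real.exp (-(lam p) * t) * ((C_F * (1 + lam p ^ 2) ^ (s_F / 2)) *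
            (C_F * (1 + lam p ^ 2) ^ (s_F / 2))) := habs
      _ = Real.exp (-(lam p) * t) * (C_F^2 * (1 + lam p ^ 2) ^ s_F) := by rw [hsq]
      _ ≤ Real.exp (-(lam p) * t) * (C_F^2 * (2^s_F * (1 + (lam p) ^ (2*s_F)))) := by
          refine mul_le_mul_of_nonneg_left ?_ (Real.exp_pos _).le
          refine mul_le_mul_of_nonneg_left hpoly1 (by positivity)
      _ = C_F^2 * 2^s_F * ((1 + (lam p) ^ (2*s_F)) * Real.exp (-(u * lam p)))
            * Real.exp (-((1-σ) * lam p * t)) * Real.exp (-(u * lam p)) := by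
          rw [hexpsplit]; ring
      _ ≤ C_F^2 * 2^s_F * (1 + A * u ^ (-(2*s_F)))
            * Real.exp (-(1 - σ) * E * t) * Real.exp (-(b * (p:ℝ) ^ ((2:ℝ)/(n:ℝ)))) := by
          have c1 : (0:ℝ) ≤ C_F^2 * 2^s_F := by positivity
          have step1 := mul_le_mul_of_nonneg_left hpoly2 c1
          have step2 := mul_le_mul step1 he3 (Real.exp_pos _).le
            (by positivity :
              (0:ℝ) ≤ C_F^2 * 2^s_F * (1 + A * u ^ (-(2*s_F))))
          exact mul_le_mul step2 he4 (Real.exp_pos _).le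
            (by
              have h1 : 0 < u ^ (-(2*s_F)) := Real.rpow_pos_of_pos hu0 _
              positivity)
      _ = g p := by simp only [hg, hM]; try ring
  -- summability and tsum bounds
  have hgsum : Summable g := hsumexp.mul_left M
  have habs_sum : Summable (fun p => |f p|) :=
    Summable.of_nonneg_of_le (fun p => abs_nonneg _) hfg hgsum
  have hfsum : Summable f := habs_sum.of_abs
  refine ⟨hfsum, ?_⟩
  -- final chain
  set κ : ℝ := -((n : ℝ) / 2 + 2 * s_F) with hκ
  have hxy : t ^ (-(2*s_F)) * t ^ (-((n:ℝ)/2)) = t ^ κ := by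
    rw [← Real.rpow_add ht, hκ]
    ring_nf
  have hz0 : 0 ≤ t ^ κ := (Real.rpow_pos_of_pos ht _).le
  have hx1 : t ^ (-(2*s_F)) ≤ 1 + t ^ κ := by
    rcases le_or_gt 1 t with h | h
    · have := Real.rpow_le_one_of_one_le_of_nonpos h (by linarith : -(2*s_F) ≤ 0)
      linarith
    · have := Real.rpow_le_rpow_of_exponent_ge ht h.le
        (by rw [hκ]; nlinarith [hn0.le] : κ ≤ -(2*s_F))
      linarith
  have hy1 : t ^ (-((n:ℝ)/2)) ≤ 1 + t ^ κ := by
    rcases le_or_gt 1 t with h | h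
    · have := Real.rpow_le_one_of_one_le_of_nonpos h (by nlinarith [hn0.le] : -((n:ℝ)/2) ≤ 0)
      linarith
    · have := Real.rpow_le_rpow_of_exponent_ge ht h.le
        (by rw [hκ]; nlinarith : κ ≤ -((n:ℝ)/2))
      linarith
  have hux : u ^ (-(2*s_F)) = (σ/2) ^ (-(2*s_F)) * t ^ (-(2*s_F)) := by
    rw [hu, show σ * t / 2 = (σ/2) * t from by ring,
      Real.mul_rpow (by linarith : (0:ℝ) ≤ σ/2) ht.le]
  have hbx : b ^ (-((n:ℝ)/2)) = (σ*c/2) ^ (-((n:ℝ)/2)) * t ^ (-((n:ℝ)/2)) := by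
    rw [hbdef, show σ * c * t / 2 = (σ*c/2) * t from by ring,
      Real.mul_rpow (by positivity : (0:ℝ) ≤ σ*c/2) ht.le]
  have hmid : (1 + A * u ^ (-(2*s_F))) * (1 + (1 + 2*(n:ℝ)^n) * b ^ (-((n:ℝ)/2)))
      ≤ (1 + A2) * (1 + B2) * (1 + t ^ κ) := by
    rw [hux, hbx]
    set xx : ℝ := t ^ (-(2*s_F))
    set yy : ℝ := t ^ (-((n:ℝ)/2))
    have hxx0 : 0 ≤ xx := (Real.rpow_pos_of_pos ht _).le
    have hyy0 : 0 ≤ yy := (Real.rpow_pos_of_pos ht _).le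
    have e1 : A * ((σ/2) ^ (-(2*s_F)) * xx) = A2 * xx := by rw [hA2]; ring
    have e2 : (1 + 2*(n:ℝ)^n) * ((σ*c/2) ^ (-((n:ℝ)/2)) * yy) = B2 * yy := by
      rw [hB2]; ring
    rw [e1, e2]
    have k1 : A2 * xx ≤ A2 * (1 + t ^ κ) := mul_le_mul_of_nonneg_left hx1 hA20.le
    have k2 : B2 * yy ≤ B2 * (1 + t ^ κ) := mul_le_mul_of_nonneg_left hy1 hB20.le
    have k3 : A2 * B2 * (xx * yy) ≤ A2 * B2 * (1 + t ^ κ) := by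
      rw [hxy]
      exact mul_le_mul_of_nonneg_left (by linarith) (by positivity)
    nlinarith [mul_nonneg hA20.le hxx0, mul_nonneg hB20.le hyy0]
  have step0 : |∑' p, f p| ≤ ∑' p, |f p| := by
    have h := norm_tsum_le_tsum_norm (f := f) (by simpa [Real.norm_eq_abs] using habs_sum)
    simpa [Real.norm_eq_abs] using h
  have step1 : ∑' p, |f p| ≤ ∑' p, g p := Summable.tsum_le_tsum hfg habs_sum hgsum
  have step2 : ∑' p, g p = M * ∑' p : ℕ, Real.exp (-(b * (p:ℝ) ^ ((2:ℝ)/(n:ℝ)))) := by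
    simp only [hg]
    exact tsum_mul_left
  have step3 : M * (∑' p : ℕ, Real.exp (-(b * (p:ℝ) ^ ((2:ℝ)/(n:ℝ)))))
      ≤ M * (1 + (1 + 2*(n:ℝ)^n) * b ^ (-((n:ℝ)/2))) := mul_le_mul_of_nonneg_left hS hM0
  have step4 : M * (1 + (1 + 2*(n:ℝ)^n) * b ^ (-((n:ℝ)/2)))
      ≤ C_F^2 * 2^s_F * (1 + A2) * (1 + B2) * (1 + t ^ κ) * Real.exp (-(1 - σ) * E * t) := by
    rw [hM]
    have c1 : (0:ℝ) ≤ C_F^2 * 2^s_F := by positivity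
    have c2 : (0:ℝ) ≤ Real.exp (-(1 - σ) * E * t) := (Real.exp_pos _).le
    calc C_F^2 * 2^s_F * (1 + A * u ^ (-(2*s_F))) * Real.exp (-(1 - σ) * E * t)
          * (1 + (1 + 2*(n:ℝ)^n) * b ^ (-((n:ℝ)/2)))
        = C_F^2 * 2^s_F * ((1 + A * u ^ (-(2*s_F)))
            * (1 + (1 + 2*(n:ℝ)^n) * b ^ (-((n:ℝ)/2)))) * Real.exp (-(1 - σ) * E * t) := by
          ring
      _ ≤ C_F^2 * 2^s_F * ((1 + A2) * (1 + B2) * (1 + t ^ κ)) * Real.exp (-(1 - σ) * E * t) :=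
          mul_le_mul_of_nonneg_right (mul_le_mul_of_nonneg_left hmid c1) c2
      _ = C_F^2 * 2^s_F * (1 + A2) * (1 + B2) * (1 + t ^ κ) * Real.exp (-(1 - σ) * E * t) := by
          ring
  exact step0.trans (step1.trans (step2.trans_le (step3.trans step4)))
end
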